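/- Let N be a random variable on the positive integers with E[log₂ N] = μ < ∞. Then H(N) ≤ μ + log₂(μ + 1) + 1, where H denotes Shannon entropy in bits. -/

import Mathlib

open Real

lemma midpt (p q s : ℝ) (hp : 0 < p) (hq : 0 < q) (hs : 0 ≤ s) :
    2 * (((p+q)/2) ^ (-s)) ≤ p ^ (-s) + q ^ (-s) := by
  have h1 : (p*q) ^ (-s/2) ≤ p ^ (-s/2) * q ^ (-s/2) := by
    rw [Real.mul_rpow hp.le hq.le]
  have h2 : 2 * (p ^ (-s/2) * q ^ (-s/2)) ≤ p ^ (-s) + q ^ (-s) := by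
    have := two_mul_le_add_sq (p ^ (-s/2)) (q ^ (-s/2))
    have e1 : (p ^ (-s/2))^2 = p ^ (-s) := by
      rw [← Real.rpow_natCast (p ^ (-s/2)) 2, ← Real.rpow_mul hp.le]; norm_num
    have e2 : (q ^ (-s/2))^2 = q ^ (-s) := by
      rw [← Real.rpow_natCast (q ^ (-s/2)) 2, ← Real.rpow_mul hq.le]; norm_num
    nlinarith
  have h3 : ((p+q)/2) ^ (-s) ≤ (p*q) ^ (-s/2) := by
    have e : ((p+q)/2) ^ (-s) = (((p+q)/2)^(2:ℕ)) ^ (-s/2) := by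
      rw [← Real.rpow_natCast ((p+q)/2) 2, ← Real.rpow_mul (by positivity)]; ring_nf
    rw [e]
    apply Real.rpow_le_rpow_of_nonpos (by positivity) (by nlinarith [sq_nonneg (p-q)]) (by linarith)
  nlinarith [Real.rpow_nonneg (mul_nonneg hp.le hq.le) (-s/2)]

lemma keyineq (a m : ℝ) (ha : 0 < a) (hm : 1 ≤ m) :
    a * m ^ (-(1+a)) ≤ (m - 1/2) ^ (-a) - (m + 1/2) ^ (-a) := by
  set F : ℝ → ℝ := fun u => (m-u)^(-a) - (m+u)^(-a) - 2*a*m^(-(1+a))*u with hF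
  have hcont : ContinuousOn F (Set.Icc 0 (1/2)) := by
    apply ContinuousOn.sub
    apply ContinuousOn.sub
    · exact (continuousOn_const.sub continuousOn_id).rpow_const
        (fun x hx => Or.inl (by simp only [Set.mem_Icc] at hx; intro h; simp only [Pi.sub_apply, id_eq] at h; obtain ⟨h1,h2⟩ := hx; nlinarith))
    · exact (continuousOn_const.add continuousOn_id).rpow_const
        (fun x hx => Or.inl (by simp only [Set.mem_Icc] at hx; intro h; simp only [Pi.add_apply, id_eq] at h; obtain ⟨h1,h2⟩ := hx; nlinarith))
    · exact continuousOn_const.mul continuousOn_id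
  have hderiv : ∀ u ∈ Set.Ioo (0:ℝ) (1/2), HasDerivAt F
      (a*(m-u)^(-a-1) + a*(m+u)^(-a-1) - 2*a*m^(-(1+a))) u := by
    intro u hu
    have hmu1 : 0 < m - u := by cases hu; nlinarith
    have hmu2 : 0 < m + u := by cases hu; nlinarith
    have d1 : HasDerivAt (fun u : ℝ => (m-u)^(-a)) (a*(m-u)^(-a-1)) u := by
      have h := (Real.hasDerivAt_rpow_const (p := -a) (Or.inl hmu1.ne')).comp u
        ((hasDerivAt_id u).const_sub m)
      exact h.congr_deriv (by ring)
    have d2 : HasDerivAt (fun u : ℝ => (m+u)^(-a)) (-a*(m+u)^(-a-1)) u := by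
      have h := (Real.hasDerivAt_rpow_const (p := -a) (Or.inl hmu2.ne')).comp u
        ((hasDerivAt_id u).const_add m)
      exact h.congr_deriv (by ring)
    have d3 : HasDerivAt (fun u : ℝ => 2*a*m^(-(1+a))*u) (2*a*m^(-(1+a))) u := by
      simpa using (hasDerivAt_id u).const_mul (2*a*m^(-(1+a)))
    have := (d1.sub d2).sub d3
    exact this.congr_deriv (by ring)
  have hmono : MonotoneOn F (Set.Icc 0 (1/2)) := by
    apply monotoneOn_of_deriv_nonneg (convex_Icc 0 (1/2)) hcont
    · intro u hu
      rw [interior_Icc] at hu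
      exact (hderiv u hu).differentiableAt.differentiableWithinAt
    · intro u hu
      rw [interior_Icc] at hu
      rw [(hderiv u hu).deriv]
      have hmu1 : 0 < m - u := by cases hu; nlinarith
      have hmu2 : 0 < m + u := by cases hu; nlinarith
      have := midpt (m-u) (m+u) (a+1) hmu1 hmu2 (by linarith)
      have e : ((m-u)+(m+u))/2 = m := by ring
      rw [e] at this
      have e2 : m ^ (-(a+1)) = m ^ (-(1+a)) := by ring_nf
      rw [e2] at this
      have e3 : (m-u) ^ (-(a+1)) = (m-u) ^ (-a-1) := by ring_nf
      have e4 : (m+u) ^ (-(a+1)) = (m+u) ^ (-a-1) := by ring_nf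
      rw [e3, e4] at this
      nlinarith
  have h0 : F 0 = 0 := by simp [hF]
  have h12 := hmono (Set.mem_Icc.2 ⟨le_refl 0, by norm_num⟩)
    (Set.mem_Icc.2 ⟨by norm_num, le_refl _⟩) (by norm_num)
  rw [h0] at h12
  simp only [hF] at h12
  nlinarith
lemma zeta_bound (a : ℝ) (ha : 0 < a) :
    Summable (fun j : ℕ => ((j:ℝ)+1) ^ (-(1+a))) ∧
    ∑' j : ℕ, ((j:ℝ)+1) ^ (-(1+a)) ≤ 2^a / a := by
  set t : ℕ → ℝ := fun j => ((j:ℝ)+1/2) ^ (-a) with ht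
  have hterm : ∀ j : ℕ, ((j:ℝ)+1) ^ (-(1+a)) ≤ (1/a) * (t j - t (j+1)) := by
    intro j
    have h := keyineq a ((j:ℝ)+1) ha (by have := Nat.cast_nonneg (α:=ℝ) j; linarith)
    have e1 : (j:ℝ)+1 - 1/2 = (j:ℝ)+1/2 := by ring
    have e2 : (j:ℝ)+1 + 1/2 = ((j:ℕ)+1:ℕ) + 1/2 := by push_cast; ring
    rw [e1, e2] at h
    simp only [ht]
    have hpos : 0 < 1/a := by positivity
    calc ((j:ℝ)+1) ^ (-(1+a)) = (1/a) * (a * ((j:ℝ)+1) ^ (-(1+a))) := by field_simp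
    _ ≤ (1/a) * ((((j:ℕ):ℝ)+1/2) ^ (-a) - (((j+1:ℕ):ℝ)+1/2) ^ (-a)) := by
        apply mul_le_mul_of_nonneg_left _ hpos.le
        convert h using 3
  have hpart : ∀ n, ∑ j ∈ Finset.range n, ((j:ℝ)+1) ^ (-(1+a)) ≤ 2^a / a := by
    intro n
    calc ∑ j ∈ Finset.range n, ((j:ℝ)+1) ^ (-(1+a))
        ≤ ∑ j ∈ Finset.range n, (1/a) * (t j - t (j+1)) :=
          Finset.sum_le_sum (fun j _ => hterm j)
      _ = (1/a) * (t 0 - t n) := by rw [← Finset.mul_sum, Finset.sum_range_sub' t n]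
      _ ≤ (1/a) * t 0 := by
          have : 0 ≤ t n := Real.rpow_nonneg (by positivity) _
          have : 0 ≤ 1/a := by positivity
          nlinarith [Real.rpow_nonneg (show (0:ℝ) ≤ (n:ℝ)+1/2 by positivity) (-a)]
      _ = 2^a / a := by
          rw [ht]
          push_cast
          rw [show (0:ℝ)+1/2 = 2⁻¹ by norm_num, ← Real.rpow_neg_one (2:ℝ),
            ← Real.rpow_mul (by norm_num)]
          ring_nf
  have hnn : ∀ j : ℕ, 0 ≤ ((j:ℝ)+1) ^ (-(1+a)) := fun j => Real.rpow_nonneg (by positivity) _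
  exact ⟨summable_of_sum_range_le hnn hpart, tsum_le_of_sum_range_le hnn hpart⟩
theorem stmt6 (f : ℕ → ℝ) (μ : ℝ)
    (hf0 : ∀ j, 0 ≤ f j) (hf1 : HasSum f 1)
    (hμ : HasSum (fun j : ℕ => f j * Real.logb 2 (j + 1)) μ) :
    -∑' j : ℕ, f j * Real.logb 2 (f j) ≤ μ + Real.logb 2 (μ + 1) + 1 := by
  have hlog2 : 0 < Real.log 2 := Real.log_pos one_lt_two
  have hμ0 : 0 ≤ μ := by
    refine hasSum_le (fun j => ?_) hasSum_zero hμ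
    exact mul_nonneg (hf0 j) (Real.logb_nonneg one_lt_two
      (by have := Nat.cast_nonneg (α:=ℝ) j; linarith))
  have hμ1 : 0 < μ + 1 := by linarith
  have hlogbμ : 0 ≤ Real.logb 2 (μ + 1) := Real.logb_nonneg one_lt_two (by linarith)
  by_cases hent : Summable (fun j : ℕ => f j * Real.logb 2 (f j))
  swap
  · rw [tsum_eq_zero_of_not_summable hent]
    simp only [neg_zero]
    linarith
  -- main case
  set a : ℝ := 1 / ((μ+1) * Real.log 2) with ha_def
  have ha : 0 < a := by positivity
  set C : ℝ := a * (2:ℝ) ^ (-a) with hC_def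
  have hC : 0 < C := by positivity
  set q : ℕ → ℝ := fun j => C * ((j:ℝ)+1) ^ (-(1+a)) with hq_def
  have hq_pos : ∀ j, 0 < q j := fun j => by
    have : (0:ℝ) < (j:ℝ)+1 := by positivity
    positivity
  obtain ⟨hzsum, hzle⟩ := zeta_bound a ha
  have hq_summable : Summable q := hzsum.mul_left C
  have hq_tsum_le : ∑' j, q j ≤ 1 := by
    rw [hq_def]
    rw [tsum_mul_left]
    calc C * ∑' j : ℕ, ((j:ℝ)+1) ^ (-(1+a)) ≤ C * (2^a / a) :=
          mul_le_mul_of_nonneg_left hzle hC.le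
      _ = 1 := by
          have h21 : (2:ℝ)^(-a) * 2^a = 1 := by
            rw [← Real.rpow_add two_pos]; simp
          rw [hC_def]
          calc a * 2^(-a) * (2^a/a) = ((2:ℝ)^(-a) * 2^a) * (a/a) := by ring
            _ = 1 := by rw [h21, div_self ha.ne']; ring
  -- sum of f * logb q
  have hfq : HasSum (fun j : ℕ => f j * Real.logb 2 (q j)) (Real.logb 2 C - (1+a)*μ) := by
    have h1 := (hf1.mul_right (Real.logb 2 C)).sub (hμ.mul_left (1+a))
    simp only [one_mul] at h1
    refine h1.congr_fun fun j => ?_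
    have hj1 : (0:ℝ) < (j:ℝ)+1 := by positivity
    have : Real.logb 2 (q j) = Real.logb 2 C + (-(1+a)) * Real.logb 2 ((j:ℝ)+1) := by
      rw [hq_def]
      rw [Real.logb_mul hC.ne' (Real.rpow_pos_of_pos hj1 _).ne']
      simp only [Real.logb, Real.log_rpow hj1]
      ring
    rw [this]; ring
  -- Gibbs
  have hdiff_le : ∀ j, f j * Real.logb 2 (q j) - f j * Real.logb 2 (f j)
      ≤ (q j - f j) / Real.log 2 := by
    intro j
    rcases eq_or_lt_of_le (hf0 j) with h | h
    · rw [← h]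
      simp only [zero_mul, mul_zero, sub_zero, zero_sub, neg_zero, sub_zero]
      positivity
    · have hq' := hq_pos j
      have e : Real.logb 2 (q j) - Real.logb 2 (f j)
          = Real.log (q j / f j) / Real.log 2 := by
        rw [Real.log_div hq'.ne' h.ne']
        simp only [Real.logb]
        ring
      have h2 : Real.log (q j / f j) ≤ q j / f j - 1 :=
        Real.log_le_sub_one_of_pos (by positivity)
      have : f j * Real.logb 2 (q j) - f j * Real.logb 2 (f j)
          = f j * ((Real.log (q j / f j)) / Real.log 2) := by rw [← e]; ring
      rw [this]
      calc f j * (Real.log (q j / f j) / Real.log 2)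
          ≤ f j * ((q j / f j - 1) / Real.log 2) := by
            apply mul_le_mul_of_nonneg_left _ h.le
            gcongr
        _ = (q j - f j) / Real.log 2 := by field_simp
  have hdiff_summable : Summable (fun j => f j * Real.logb 2 (q j) - f j * Real.logb 2 (f j)) :=
    hfq.summable.sub hent
  have hrhs : HasSum (fun j => (q j - f j) / Real.log 2) (((∑' j, q j) - 1) / Real.log 2) :=
    (hq_summable.hasSum.sub hf1).div_const _
  have hsum_le : (Real.logb 2 C - (1+a)*μ) - (∑' j, f j * Real.logb 2 (f j))
      ≤ ((∑' j, q j) - 1) / Real.log 2 := by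
    have h1 := Summable.tsum_le_tsum hdiff_le hdiff_summable hrhs.summable
    rw [hrhs.tsum_eq] at h1
    rwa [Summable.tsum_sub hfq.summable hent, hfq.tsum_eq] at h1
  have hnonpos : ((∑' j, q j) - 1) / Real.log 2 ≤ 0 :=
    div_nonpos_of_nonpos_of_nonneg (by linarith) hlog2.le
  -- so -∑' f logb f ≤ (1+a)μ - logb 2 C
  have hmain : -∑' j, f j * Real.logb 2 (f j) ≤ (1+a)*μ - Real.logb 2 C := by linarith
  -- arithmetic
  have hA : a * (μ+1) = 1/Real.log 2 := by rw [ha_def]; field_simp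
  have haμ : a*μ = 1/Real.log 2 - a := by rw [← hA]; ring
  have hLa : Real.logb 2 a = -(Real.log (μ+1) + Real.log (Real.log 2)) / Real.log 2 := by
    rw [ha_def, Real.logb, one_div, Real.log_inv, Real.log_mul hμ1.ne' hlog2.ne']
  have hLC : Real.logb 2 C = Real.logb 2 a + (-a) := by
    rw [hC_def, Real.logb_mul ha.ne' (Real.rpow_pos_of_pos two_pos _).ne',
      Real.logb_rpow two_pos (by norm_num)]
  have hLμ : Real.logb 2 (μ+1) = Real.log (μ+1)/Real.log 2 := rfl
  have hfin : (1 + Real.log (Real.log 2))/Real.log 2 ≤ 1 := by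
    rw [div_le_one hlog2]
    linarith [Real.log_le_sub_one_of_pos hlog2]
  have hexp : (1+a)*μ - Real.logb 2 C
      = μ + (1 + Real.log (Real.log 2))/Real.log 2 + Real.log (μ+1)/Real.log 2 := by
    rw [hLC, hLa]
    have : (1+a)*μ = μ + a*μ := by ring
    rw [this, haμ]
    field_simp
    ring
  rw [hLμ]
  linarith
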